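/- Let a, b be commuting pseudo Drazin invertible elements of a Banach algebra A (ab = ba). Then a + b is pseudo Drazin invertible if and only if 1 + a^‡ b is pseudo Drazin invertible; in that case (1 + a^‡ b)^‡ = a^Π + a²a^‡ (a + b)^‡, where a^Π = 1 − a a^‡. -/

import Mathlib

/-- Membership in the Jacobson radical of a ring. -/
def MemJacobson {A : Type*} [Ring A] (x : A) : Prop := ∀ y : A, IsUnit (1 - y * x)

/-- `b` is a pseudo Drazin inverse of `a`. -/
def IsPDrazinInv {A : Type*} [Ring A] (a b : A) : Prop :=
  a * b = b * a ∧ b * a * b = b ∧ ∃ k : ℕ, 1 ≤ k ∧ MemJacobson (a ^ k - a ^ (k + 1) * b)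

open Filter ENNReal NNReal

set_option linter.unusedSectionVars false
set_option maxHeartbeats 1000000


section RingLemmas
variable {A : Type*} [Ring A]

lemma isUnit_one_sub_swap {x y : A} (h : IsUnit (1 - x * y)) : IsUnit (1 - y * x) := by
  obtain ⟨u, hu⟩ := h
  have h1 : (1 - x*y) * ↑u⁻¹ = 1 := by rw [← hu]; exact u.mul_inv
  have h2 : (↑u⁻¹ : A) * (1 - x*y) = 1 := by rw [← hu]; exact u.inv_mul
  refine ⟨⟨1 - y*x, 1 + y * ↑u⁻¹ * x, ?_, ?_⟩, rfl⟩
  · calc (1 - y*x) * (1 + y*↑u⁻¹*x) = 1 - y*x + y*((1-x*y)*↑u⁻¹)*x := by noncomm_ring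
    _ = 1 := by rw [h1]; noncomm_ring
  · calc (1 + y*↑u⁻¹*x) * (1 - y*x) = 1 - y*x + y*(↑u⁻¹*(1-x*y))*x := by noncomm_ring
    _ = 1 := by rw [h2]; noncomm_ring

lemma MemJacobson.mul_left {x : A} (h : MemJacobson x) (z : A) : MemJacobson (z * x) := by
  intro y
  have := h (y * z)
  rwa [mul_assoc] at this

lemma MemJacobson.mul_right {x : A} (h : MemJacobson x) (z : A) : MemJacobson (x * z) := by
  intro y
  have h1 : IsUnit (1 - z * (y * x)) := by
    have := h (z * y); rwa [mul_assoc] at this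
  have := isUnit_one_sub_swap h1
  rwa [mul_assoc] at this

lemma MemJacobson.zero : MemJacobson (0 : A) := fun y => by simp

lemma MemJacobson.add {x y : A} (hx : MemJacobson x) (hy : MemJacobson y) :
    MemJacobson (x + y) := by
  intro z
  obtain ⟨u, hu⟩ := hx z
  have h2 : IsUnit ((1 : A) - (↑u⁻¹ * z) * y) := hy _
  have e1 : (1 : A) - z*(x+y) = ↑u * (1 - (↑u⁻¹*z)*y) := by
    have e2 : (↑u : A) * (↑u⁻¹ * z * y) = z * y := by
      rw [← mul_assoc, ← mul_assoc, u.mul_inv, one_mul]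
    rw [mul_sub, mul_one, e2, hu]
    noncomm_ring
  rw [e1]
  exact u.isUnit.mul h2

lemma MemJacobson.sum {ι : Type*} (s : Finset ι) (f : ι → A)
    (h : ∀ i ∈ s, MemJacobson (f i)) : MemJacobson (∑ i ∈ s, f i) :=
  Finset.sum_induction f MemJacobson (fun _ _ ha hb => ha.add hb) MemJacobson.zero h

lemma isUnit_of_commute_of_isUnit_mul {x y : A} (hc : x*y = y*x) (h : IsUnit (x*y)) :
    IsUnit x := by
  obtain ⟨u, hu⟩ := h
  have hr : x * (y * ↑u⁻¹) = 1 := by rw [← mul_assoc, ← hu]; exact u.mul_inv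
  have hl : (↑u⁻¹ * y) * x = 1 := by rw [mul_assoc, ← hc, ← hu]; exact u.inv_mul
  have hrl : y * ↑u⁻¹ = ↑u⁻¹ * y := by
    calc y * ↑u⁻¹ = ((↑u⁻¹*y)*x) * (y * ↑u⁻¹) := by rw [hl, one_mul]
    _ = (↑u⁻¹*y) * (x * (y*↑u⁻¹)) := by noncomm_ring
    _ = ↑u⁻¹ * y := by rw [hr, mul_one]
  exact ⟨⟨x, y*↑u⁻¹, hr, by rw [hrl]; exact hl⟩, rfl⟩

lemma isUnit_one_sub_of_pow_memJ {x : A} (k : ℕ) (h : MemJacobson (x ^ k)) :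
    IsUnit (1 - x) := by
  have hg : (∑ i ∈ Finset.range k, x ^ i) * (x - 1) = x ^ k - 1 := geom_sum_mul x k
  have hc : (1 - x) * (∑ i ∈ Finset.range k, x ^ i) = (∑ i ∈ Finset.range k, x ^ i) * (1 - x) := by
    have : Commute x (∑ i ∈ Finset.range k, x ^ i) :=
      Commute.sum_right _ _ _ (fun i _ => (Commute.refl x).pow_right i)
    calc (1 - x) * (∑ i ∈ Finset.range k, x ^ i)
        = (∑ i ∈ Finset.range k, x ^ i) - x * (∑ i ∈ Finset.range k, x ^ i) := by noncomm_ring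
      _ = (∑ i ∈ Finset.range k, x ^ i) - (∑ i ∈ Finset.range k, x ^ i) * x := by rw [this.eq]
      _ = (∑ i ∈ Finset.range k, x ^ i) * (1 - x) := by noncomm_ring
  have hunit : IsUnit ((1 - x) * (∑ i ∈ Finset.range k, x ^ i)) := by
    have e : (1 - x) * (∑ i ∈ Finset.range k, x ^ i) = 1 - x ^ k := by
      rw [hc]
      have := hg
      calc (∑ i ∈ Finset.range k, x ^ i) * (1 - x)
          = -((∑ i ∈ Finset.range k, x ^ i) * (x - 1)) := by noncomm_ring
        _ = -(x^k - 1) := by rw [hg]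
        _ = 1 - x^k := by noncomm_ring
    rw [e]
    have := h 1
    rwa [one_mul] at this
  exact isUnit_of_commute_of_isUnit_mul hc hunit

lemma memJ_pow_ge {x y : A} {k m : ℕ} (h : MemJacobson (x ^ k - x ^ (k+1) * y)) (hm : k ≤ m) :
    MemJacobson (x ^ m - x ^ (m+1) * y) := by
  obtain ⟨r, rfl⟩ := Nat.exists_eq_add_of_le hm
  have e : x ^ (k+r) - x ^ (k+r+1) * y = x ^ r * (x ^ k - x ^ (k+1) * y) := by
    rw [mul_sub, ← pow_add, ← mul_assoc, ← pow_add,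
      show r + k = k + r from by omega, show r + (k+1) = k+r+1 from by omega]
  rw [e]
  exact h.mul_left _

end RingLemmas

lemma MemJacobson.neg {A : Type*} [Ring A] {x : A} (h : MemJacobson x) : MemJacobson (-x) := by
  intro y
  have := h (-y)
  rw [neg_mul] at this
  rwa [mul_neg]

lemma isUnit_one_add_of_pow_memJ {A : Type*} [Ring A] {x : A} (k : ℕ)
    (h : MemJacobson (x ^ k)) : IsUnit (1 + x) := by
  have h2 : MemJacobson ((-x) ^ k) := by
    rcases Nat.even_or_odd k with he | ho
    · rw [he.neg_pow]; exact h
    · rw [ho.neg_pow]; exact h.neg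
  have := isUnit_one_sub_of_pow_memJ k h2
  rwa [sub_neg_eq_add] at this

section Analytic
variable {A : Type*} [NormedRing A] [NormedAlgebra ℂ A] [CompleteSpace A]

lemma spectralRadius_eq_zero_of_memJ (j : A) (hj : MemJacobson j) :
    spectralRadius ℂ j = 0 := by
  refine le_antisymm ?_ (zero_le)
  refine iSup₂_le fun k hk => ?_
  suffices hk0 : k = 0 by simp [hk0]
  by_contra hk0
  rw [spectrum.mem_iff] at hk
  apply hk
  have h1 : IsUnit ((1:A) - (k⁻¹ • (1:A)) * j) := hj _
  have e : algebraMap ℂ A k - j = k • ((1:A) - (k⁻¹ • (1:A)) * j) := by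
    rw [smul_sub, Algebra.algebraMap_eq_smul_one, smul_mul_assoc, smul_smul,
      mul_inv_cancel₀ hk0, one_smul, one_mul]
  rw [e]
  exact h1.smul (Units.mk0 k hk0)

lemma eq_zero_of_norm_rec {x y u : A} (hx : MemJacobson x)
    (h : ∀ n : ℕ, ‖u‖₊ ≤ ‖x ^ n‖₊ * ‖y ^ n‖₊ * ‖u‖₊) : u = 0 := by
  by_contra hu0
  have hupos : (0:ℝ≥0) < ‖u‖₊ := nnnorm_pos.mpr hu0
  have hX := spectrum.pow_nnnorm_pow_one_div_tendsto_nhds_spectralRadius x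
  rw [spectralRadius_eq_zero_of_memJ x hx] at hX
  have hY := spectrum.pow_nnnorm_pow_one_div_tendsto_nhds_spectralRadius y
  have hYfin : spectralRadius ℂ y ≠ ⊤ := by
    refine ne_top_of_le_ne_top ?_ (spectrum.spectralRadius_le_pow_nnnorm_pow_one_div ℂ y 0)
    exact ENNReal.mul_ne_top (ENNReal.rpow_ne_top_of_nonneg (by norm_num) ENNReal.coe_ne_top)
      (ENNReal.rpow_ne_top_of_nonneg (by norm_num) ENNReal.coe_ne_top)
  have hprod := ENNReal.Tendsto.mul hX (Or.inr hYfin) hY (Or.inr ENNReal.zero_ne_top)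
  rw [zero_mul] at hprod
  have hev : ∀ᶠ n : ℕ in atTop,
      ((‖x^n‖₊:ℝ≥0∞)^(1/(n:ℝ))) * ((‖y^n‖₊:ℝ≥0∞)^(1/(n:ℝ))) < 1 :=
    hprod.eventually_lt_const (by norm_num)
  obtain ⟨n, hn, hn1⟩ := (hev.and (eventually_ge_atTop 1)).exists
  have hnpos : (0:ℝ) < 1/(n:ℝ) := by
    apply one_div_pos.mpr
    exact_mod_cast Nat.lt_of_lt_of_le Nat.zero_lt_one hn1
  have hlt : ((‖x^n‖₊ * ‖y^n‖₊ : ℝ≥0) : ℝ≥0∞) < 1 := by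
    have e : ((‖x^n‖₊ * ‖y^n‖₊ : ℝ≥0):ℝ≥0∞) ^ (1/(n:ℝ)) < 1 := by
      rw [ENNReal.coe_mul, ENNReal.mul_rpow_of_nonneg _ _ (le_of_lt hnpos)]
      exact hn
    by_contra hge
    push_neg at hge
    have h2 : (1:ℝ≥0∞) ≤ ((‖x^n‖₊ * ‖y^n‖₊ : ℝ≥0):ℝ≥0∞) ^ (1/(n:ℝ)) := by
      calc (1:ℝ≥0∞) = (1:ℝ≥0∞)^(1/(n:ℝ)) := (ENNReal.one_rpow _).symm
      _ ≤ _ := ENNReal.rpow_le_rpow hge (le_of_lt hnpos)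
    exact absurd (lt_of_le_of_lt h2 e) (lt_irrefl _)
  have hlt' : ‖x^n‖₊ * ‖y^n‖₊ < 1 := by exact_mod_cast hlt
  have hfinal : ‖x^n‖₊ * ‖y^n‖₊ * ‖u‖₊ < ‖u‖₊ := mul_lt_of_lt_one_left hupos hlt'
  exact absurd ((h n).trans_lt hfinal) (lt_irrefl _)


lemma comm2 {a d : A} (h : IsPDrazinInv a d) {x : A} (hx : a * x = x * a) :
    d * x = x * d := by
  obtain ⟨hcomm, hdad, k, hk1, hkJ⟩ := h
  obtain ⟨j, hj⟩ : ∃ j, j = a ^ k - a ^ (k+1) * d := ⟨_, rfl⟩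
  rw [← hj] at hkJ
  obtain ⟨E, hE⟩ : ∃ E, E = a * d := ⟨_, rfl⟩
  have hEda : E = d * a := by rw [hE, hcomm]
  have hee : E * E = E := by
    rw [hE]
    calc a*d*(a*d) = a*(d*a*d) := by noncomm_ring
    _ = a*d := by rw [hdad]
  have hdE : d * E = d := by rw [hE, ← mul_assoc, hdad]
  have hEd : E * d = d := by rw [hEda]; exact hdad
  have cad : Commute a d := hcomm
  have cax : Commute a x := hx
  have caE : Commute a E := by rw [hE]; exact (Commute.refl a).mul_right cad
  have caj : Commute a j := by
    rw [hj]
    exact ((Commute.refl a).pow_right k).sub_right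
      (((Commute.refl a).pow_right (k+1)).mul_right cad)
  -- the u part : u = x*E - E*(x*E)
  obtain ⟨u, hu⟩ : ∃ u, u = x*E - E*(x*E) := ⟨_, rfl⟩
  have cau : Commute a u := by
    rw [hu]; exact (cax.mul_right caE).sub_right (caE.mul_right (cax.mul_right caE))
  have hue : u * E = u := by
    rw [hu]
    simp only [sub_mul, mul_assoc]
    rw [hee]
  have heu : E * u = 0 := by
    rw [hu, mul_sub, ← mul_assoc E E, hee, sub_self]
  have hkey : ∀ n : ℕ, u = a ^ n * u * d ^ n := by
    intro n; induction n with
    | zero => simp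
    | succ n ih =>
      have h1 : u = a * u * d := by
        conv_lhs => rw [← hue, hE]
        rw [← mul_assoc, ← cau.eq]
      calc u = a^n * u * d^n := ih
      _ = a^n * (a*u*d) * d^n := by rw [← h1]
      _ = a^(n+1)*u*d^(n+1) := by rw [pow_succ a n, pow_succ' d n]; simp only [mul_assoc]
  have hju : ∀ n : ℕ, j ^ n * u = a ^ (k*n) * u := by
    intro n; induction n with
    | zero => simp
    | succ n ih =>
      have h1 : j * u = a^k * u := by
        rw [hj, sub_mul]
        have h2 : a^(k+1)*d*u = 0 := by
          rw [pow_succ, mul_assoc, mul_assoc, ← mul_assoc a d u, ← hE, heu, mul_zero]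
        rw [h2, sub_zero]
      calc j^(n+1)*u = j^n*(j*u) := by rw [pow_succ, mul_assoc]
      _ = j^n*(a^k*u) := by rw [h1]
      _ = a^k*(j^n*u) := by rw [← mul_assoc, ← (caj.pow_pow k n).eq, mul_assoc]
      _ = a^k*(a^(k*n)*u) := by rw [ih]
      _ = a^(k*(n+1))*u := by
          rw [← mul_assoc, ← pow_add, show k + k*n = k*(n+1) from by ring]
  have hnormu : ∀ n : ℕ, ‖u‖₊ ≤ ‖j ^ n‖₊ * ‖(d^k) ^ n‖₊ * ‖u‖₊ := by
    intro n
    have h2 := hkey (k*n)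
    rw [← hju n, pow_mul] at h2
    calc ‖u‖₊ = ‖j^n*u*(d^k)^n‖₊ := by rw [← h2]
    _ ≤ ‖j^n*u‖₊*‖(d^k)^n‖₊ := nnnorm_mul_le _ _
    _ ≤ (‖j^n‖₊*‖u‖₊)*‖(d^k)^n‖₊ := mul_le_mul_left (nnnorm_mul_le _ _) _
    _ = ‖j^n‖₊*‖(d^k)^n‖₊*‖u‖₊ := by ring
  have hu0 : u = 0 := eq_zero_of_norm_rec hkJ hnormu
  -- the v part : v = E*x - E*(x*E)
  obtain ⟨v, hv⟩ : ∃ v, v = E*x - E*(x*E) := ⟨_, rfl⟩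
  have cav : Commute a v := by
    rw [hv]; exact (caE.mul_right cax).sub_right (caE.mul_right (cax.mul_right caE))
  have hvE : v * E = 0 := by
    rw [hv]
    simp only [sub_mul, mul_assoc]
    rw [hee, sub_self]
  have hEv : E * v = v := by
    rw [hv, mul_sub, ← mul_assoc E E, hee, ← mul_assoc E E, hee]
  have hkeyv : ∀ n : ℕ, v = d ^ n * v * a ^ n := by
    intro n; induction n with
    | zero => simp
    | succ n ih =>
      have h1 : v = d * v * a := by
        conv_lhs => rw [← hEv, hEda]
        rw [mul_assoc, cav.eq, ← mul_assoc]
      calc v = d^n * v * a^n := ih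
      _ = d^n * (d*v*a) * a^n := by rw [← h1]
      _ = d^(n+1)*v*a^(n+1) := by rw [pow_succ d n, pow_succ' a n]; simp only [mul_assoc]
  have hjv : ∀ n : ℕ, v * j ^ n = v * a ^ (k*n) := by
    intro n; induction n with
    | zero => simp
    | succ n ih =>
      have h1 : v * j = v * a^k := by
        rw [hj, mul_sub]
        have h2 : v*(a^(k+1)*d) = 0 := by
          rw [pow_succ, mul_assoc, ← hE, ← mul_assoc, ← (cav.pow_left k).eq,
            mul_assoc, hvE, mul_zero]
        rw [h2, sub_zero]
      calc v*j^(n+1) = (v*j)*j^n := by rw [pow_succ', ← mul_assoc]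
      _ = (v*a^k)*j^n := by rw [h1]
      _ = v*(a^k*j^n) := by rw [mul_assoc]
      _ = v*(j^n*a^k) := by rw [(caj.pow_pow k n).eq]
      _ = (v*j^n)*a^k := by rw [mul_assoc]
      _ = (v*a^(k*n))*a^k := by rw [ih]
      _ = v*a^(k*(n+1)) := by
          rw [mul_assoc, ← pow_add, show k*n + k = k*(n+1) from by ring]
  have hnormv : ∀ n : ℕ, ‖v‖₊ ≤ ‖j ^ n‖₊ * ‖(d^k) ^ n‖₊ * ‖v‖₊ := by
    intro n
    have h2 := hkeyv (k*n)
    rw [mul_assoc, ← hjv n, pow_mul, ← mul_assoc] at h2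
    calc ‖v‖₊ = ‖(d^k)^n*v*j^n‖₊ := by rw [← h2]
    _ ≤ ‖(d^k)^n*v‖₊*‖j^n‖₊ := nnnorm_mul_le _ _
    _ ≤ (‖(d^k)^n‖₊*‖v‖₊)*‖j^n‖₊ := mul_le_mul_left (nnnorm_mul_le _ _) _
    _ = ‖j^n‖₊*‖(d^k)^n‖₊*‖v‖₊ := by ring
  have hv0 : v = 0 := eq_zero_of_norm_rec hkJ hnormv
  -- conclude E*x = x*E
  have e1 : x*E = E*(x*E) := sub_eq_zero.mp (hu ▸ hu0)
  have e2 : E*x = E*(x*E) := sub_eq_zero.mp (hv ▸ hv0)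
  have hxE : x * E = E * x := by rw [e1, ← e2]
  -- conclude d*x = x*d
  have haw : a * (d*x - x*d) = 0 := by
    calc a*(d*x - x*d) = E*x - (a*x)*d := by rw [hE]; noncomm_ring
    _ = E*x - (x*a)*d := by rw [hx]
    _ = E*x - x*E := by rw [hE]; noncomm_ring
    _ = 0 := by rw [hxE, sub_self]
  have hEw : E * (d*x - x*d) = d*x - x*d := by
    calc E*(d*x - x*d) = (E*d)*x - (E*x)*d := by noncomm_ring
    _ = d*x - (x*E)*d := by rw [hEd, ← hxE]
    _ = d*x - x*(E*d) := by rw [mul_assoc]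
    _ = d*x - x*d := by rw [hEd]
  have hfin : d*x - x*d = 0 := by
    rw [← hEw, hEda, mul_assoc, haw, mul_zero]
  exact sub_eq_zero.mp hfin
end Analytic

section Generic
variable {R : Type*} [CommRing R]

lemma gen_fg (a b c d : R) (h1 : d*a*d = d) :
    (1+d*b)*((1-a*d) + a^2*d*c) = 1 - (a*d)*(1-c*(a+b)) := by
  linear_combination (a*b*c - b) * h1

lemma gen_gfg (a b c d : R) (h1 : d*a*d = d) (h2 : c*(a+b)*c = c) :
    ((1-a*d) + a^2*d*c) * (1+d*b) * ((1-a*d) + a^2*d*c) = (1-a*d) + a^2*d*c := by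
  linear_combination (((1-a*d) + a^2*d*c)*(a*b*c - b) + (a - a^2*c)*(1 - c*(a+b))) * h1
    + (a^2*d) * h2

lemma gen_fe (a b d : R) (h1 : d*a*d = d) :
    (1+d*b)*(a*d) = d*((a+b)*(a*d)) := by
  linear_combination (-a) * h1

lemma gen_se (a b d : R) (h1 : d*a*d = d) :
    (a+b)*(a*d) = a*((1+d*b)*(a*d)) := by
  linear_combination (-(a*b)) * h1

lemma gen_pow1 (a b d : R) (h1 : d*a*d = d) (m : ℕ) :
    (1+d*b)^m * (a*d) = d^m * ((a+b)^m * (a*d)) := by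
  induction m with
  | zero => simp
  | succ m ih =>
    have hfe := gen_fe a b d h1
    calc (1+d*b)^(m+1) * (a*d) = (1+d*b)^m * ((1+d*b)*(a*d)) := by ring
    _ = (1+d*b)^m * (d*((a+b)*(a*d))) := by rw [hfe]
    _ = d * ((a+b) * ((1+d*b)^m * (a*d))) := by ring
    _ = d * ((a+b) * (d^m * ((a+b)^m * (a*d)))) := by rw [ih]
    _ = d^(m+1) * ((a+b)^(m+1) * (a*d)) := by ring

lemma gen_pow2 (a b d : R) (h1 : d*a*d = d) (m : ℕ) :
    (a+b)^m * (a*d) = a^m * ((1+d*b)^m * (a*d)) := by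
  induction m with
  | zero => simp
  | succ m ih =>
    have hse := gen_se a b d h1
    calc (a+b)^(m+1) * (a*d) = (a+b)^m * ((a+b)*(a*d)) := by ring
    _ = (a+b)^m * (a*((1+d*b)*(a*d))) := by rw [hse]
    _ = a * ((1+d*b) * ((a+b)^m * (a*d))) := by ring
    _ = a * ((1+d*b) * (a^m * ((1+d*b)^m * (a*d)))) := by rw [ih]
    _ = a^(m+1) * ((1+d*b)^(m+1) * (a*d)) := by ring

lemma gen_rad (a b c d : R) (h1 : d*a*d = d) (m : ℕ) :
    (1+d*b)^m - (1+d*b)^(m+1)*((1-a*d) + a^2*d*c)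
      = (d^m*(a*d)) * ((a+b)^m - (a+b)^(m+1)*c) := by
  linear_combination (-((1+d*b)^m)) * (gen_fg a b c d h1) + (1-c*(a+b)) * (gen_pow1 a b d h1 m)

lemma gen_tpow (a d B : R) (h1 : d*a*d = d) (k : ℕ) :
    (a*((1-a*d)*B))^(k+1) = (a^(k+1) - a^(k+2)*d)*B^(k+1) := by
  induction k with
  | zero => ring
  | succ k ih =>
    calc (a*((1-a*d)*B))^(k+2) = (a*((1-a*d)*B)) * (a*((1-a*d)*B))^(k+1) := by ring
    _ = (a*((1-a*d)*B)) * ((a^(k+1) - a^(k+2)*d)*B^(k+1)) := by rw [ih]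
    _ = (a^(k+2) - a^(k+3)*d)*B^(k+2) := by linear_combination (a^(k+3)*B^(k+2)) * h1

lemma gen_sw (a b d B h τ : R) (h1 : d*a*d = d)
    (h5 : (1 + a*((1-a*d)*B))*τ = 1) :
    (a+b)*((a*d)*h*d + B*((1-a*d)*τ))
      = (a*d)*((1+d*b)*h) + (1-a*d) - (1-b*B)*((1-a*d)*τ) := by
  linear_combination (a*h - a^2*B*τ)*h1 + (1-a*d)*h5

lemma gen_wsw (a b d B h τ : R) (h1 : d*a*d = d) (h3 : B*b*B = B)
    (h4 : h*(1+d*b)*h = h) (h5 : (1 + a*((1-a*d)*B))*τ = 1) :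
    ((a*d)*h*d + B*((1-a*d)*τ)) * (a+b) * ((a*d)*h*d + B*((1-a*d)*τ))
      = (a*d)*h*d + B*((1-a*d)*τ) := by
  linear_combination
    (((a*d)*h*d + B*((1-a*d)*τ)) * ((a*h - a^2*B*τ)) +
      (a*d*h - a*B*τ*(1+d*b)*h - (a*d)*h + a*B*τ + (a*d)*h*(1-b*B)*τ)) * h1
    + (((a*d)*h*d + B*((1-a*d)*τ)) * (1-a*d)) * h5
    + ((a*d)^2*d) * h4 + ((1-a*d)^2*τ^2) * h3

lemma gen_back_rad (a b d B h τ : R) (h1 : d*a*d = d)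
    (h5 : (1 + a*((1-a*d)*B))*τ = 1) (m : ℕ) :
    (a+b)^m - (a+b)^(m+1)*((a*d)*h*d + B*((1-a*d)*τ))
      = a^m*(a*d)*((1+d*b)^m - (1+d*b)^(m+1)*h)
        + (a+b)^m*((1-b*B)*((1-a*d)*τ)) := by
  linear_combination (1-(1+d*b)*h) * (gen_pow2 a b d h1 m)
    - (a+b)^m * (gen_sw a b d B h τ h1 h5)

lemma gen_case1 (a b d B τ n : R) (k r j : ℕ) :
    a^(k+r) * b^j * n * ((1-b*B)*((1-a*d)*τ))
      = (a^k - a^(k+1)*d) * (a^r * b^j * n * ((1-b*B)*τ)) := by ring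

lemma gen_case2 (a b d B τ n : R) (i k r : ℕ) :
    a^i * b^(k+r) * n * ((1-b*B)*((1-a*d)*τ))
      = (b^k - b^(k+1)*B) * (a^i * b^r * n * ((1-a*d)*τ)) := by ring

end Generic

section Main
variable {A : Type*} [NormedRing A] [NormedAlgebra ℂ A] [CompleteSpace A]

lemma part2 {a ad b : A} (ha : IsPDrazinInv a ad) (hcomm : a * b = b * a)
    (c : A) (hc : IsPDrazinInv (a + b) c) :
    IsPDrazinInv (1 + ad * b) ((1 - a * ad) + a ^ 2 * ad * c) := by
  have hadb : ad * b = b * ad := comm2 ha hcomm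
  have hsa : (a+b)*a = a*(a+b) := by rw [add_mul, mul_add, hcomm]
  have hca : c*a = a*c := comm2 hc hsa
  have hsb : (a+b)*b = b*(a+b) := by rw [add_mul, mul_add, hcomm]
  have hcb : c*b = b*c := comm2 hc hsb
  have hdc : ad*c = c*ad := comm2 ha hca.symm
  obtain ⟨k, hk1, hkJ⟩ := hc.2.2
  set S : Set A := {a, b, c, ad} with hS
  have hScomm : ∀ x ∈ S, ∀ y ∈ S, x * y = y * x := by
    intro x hx y hy
    simp only [hS, Set.mem_insert_iff, Set.mem_singleton_iff] at hx hy
    rcases hx with rfl|rfl|rfl|rfl <;> rcases hy with rfl|rfl|rfl|rfl <;>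
      (first
        | rfl | exact hcomm | exact hcomm.symm | exact ha.1 | exact ha.1.symm
        | exact hca | exact hca.symm | exact hcb | exact hcb.symm
        | exact hadb | exact hadb.symm | exact hdc | exact hdc.symm)
  letI : CommRing (Subring.closure S) := Subring.closureCommRingOfComm hScomm
  have ma : a ∈ Subring.closure S := Subring.subset_closure (by simp [hS])
  have mb : b ∈ Subring.closure S := Subring.subset_closure (by simp [hS])
  have mc : c ∈ Subring.closure S := Subring.subset_closure (by simp [hS])
  have md : ad ∈ Subring.closure S := Subring.subset_closure (by simp [hS])
  set a' : Subring.closure S := ⟨a, ma⟩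
  set b' : Subring.closure S := ⟨b, mb⟩
  set c' : Subring.closure S := ⟨c, mc⟩
  set d' : Subring.closure S := ⟨ad, md⟩
  have h1 : d'*a'*d' = d' := Subtype.ext ha.2.1
  have h2 : c'*(a'+b')*c' = c' := Subtype.ext hc.2.1
  refine ⟨?_, ?_, k, hk1, ?_⟩
  · exact congrArg Subtype.val
      (mul_comm ((1:Subring.closure S)+d'*b') ((1-a'*d') + a'^2*d'*c'))
  · exact congrArg Subtype.val (gen_gfg a' b' c' d' h1 h2)
  · have H : (1+ad*b)^k - (1+ad*b)^(k+1)*((1-a*ad) + a^2*ad*c)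
        = (ad^k*(a*ad)) * ((a+b)^k - (a+b)^(k+1)*c) :=
      congrArg Subtype.val (gen_rad a' b' c' d' h1 k)
    rw [H]
    exact hkJ.mul_left _

lemma backward {a ad b bd : A} (ha : IsPDrazinInv a ad) (hb : IsPDrazinInv b bd)
    (hcomm : a * b = b * a) {h : A} (hh : IsPDrazinInv (1 + ad * b) h) :
    ∃ w, IsPDrazinInv (a + b) w := by
  obtain ⟨ka, hka1, haJ⟩ := ha.2.2
  obtain ⟨kb, hkb1, hbJ⟩ := hb.2.2
  obtain ⟨kf, hkf1, hfJ⟩ := hh.2.2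
  have hadb : ad * b = b * ad := comm2 ha hcomm
  have hbda : bd * a = a * bd := comm2 hb hcomm.symm
  have hbdad : bd * ad = ad * bd := comm2 hb hadb.symm
  -- basic Commute facts
  have cab : Commute a b := hcomm
  have cad : Commute a ad := ha.1
  have caB : Commute a bd := hbda.symm
  have cbd : Commute b ad := hadb.symm
  have cbB : Commute b bd := hb.1
  have cdB : Commute ad bd := hbdad.symm
  -- commutes with f = 1 + ad*b
  have caf : Commute a (1 + ad*b) := (Commute.one_right a).add_right (cad.mul_right cab)
  have cbf : Commute b (1 + ad*b) :=
    (Commute.one_right b).add_right (cbd.mul_right (Commute.refl b))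
  have cdf : Commute ad (1 + ad*b) :=
    (Commute.one_right ad).add_right ((Commute.refl ad).mul_right cbd.symm)
  have cBf : Commute bd (1 + ad*b) :=
    (Commute.one_right bd).add_right (cdB.symm.mul_right cbB.symm)
  have hha : h * a = a * h := comm2 hh caf.symm.eq
  have hhb : h * b = b * h := comm2 hh cbf.symm.eq
  have hhd : h * ad = ad * h := comm2 hh cdf.symm.eq
  have hhB : h * bd = bd * h := comm2 hh cBf.symm.eq
  have cah : Commute a h := hha.symm
  have cbh : Commute b h := hhb.symm
  have cdh : Commute ad h := hhd.symm
  have cBh : Commute bd h := hhB.symm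
  -- the unit t = 1 + a*((1-a*ad)*bd)
  obtain ⟨ka', rfl⟩ : ∃ ka', ka = ka' + 1 := ⟨ka - 1, by omega⟩
  have hxk : (a*((1-a*ad)*bd))^(ka'+1) = (a^(ka'+1) - a^(ka'+2)*ad)*bd^(ka'+1) := by
    set S1 : Set A := {a, ad, bd} with hS1
    have hS1comm : ∀ x ∈ S1, ∀ y ∈ S1, x * y = y * x := by
      intro x hx y hy
      simp only [hS1, Set.mem_insert_iff, Set.mem_singleton_iff] at hx hy
      rcases hx with rfl|rfl|rfl <;> rcases hy with rfl|rfl|rfl <;>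
        (first
          | rfl | exact cad.eq | exact cad.symm.eq | exact caB.eq | exact caB.symm.eq
          | exact cdB.eq | exact cdB.symm.eq)
    letI : CommRing (Subring.closure S1) := Subring.closureCommRingOfComm hS1comm
    have ma : a ∈ Subring.closure S1 := Subring.subset_closure (by simp [hS1])
    have md : ad ∈ Subring.closure S1 := Subring.subset_closure (by simp [hS1])
    have mB : bd ∈ Subring.closure S1 := Subring.subset_closure (by simp [hS1])
    exact congrArg Subtype.val
      (gen_tpow (⟨a, ma⟩ : Subring.closure S1) ⟨ad, md⟩ ⟨bd, mB⟩ (Subtype.ext ha.2.1) ka')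
  have hmem : MemJacobson ((a*((1-a*ad)*bd))^(ka'+1)) := by
    rw [hxk]
    exact haJ.mul_right _
  obtain ⟨U, hU⟩ := isUnit_one_add_of_pow_memJ (ka'+1) hmem
  have htτ : (1 + a*((1-a*ad)*bd)) * (↑U⁻¹ : A) = 1 := by rw [← hU]; exact U.mul_inv
  -- commutes with τ = ↑U⁻¹
  have ctt : ∀ z : A, Commute z a → Commute z ad → Commute z bd →
      Commute z (↑U⁻¹ : A) := by
    intro z hza hzd hzB
    have : Commute z (1 + a*((1-a*ad)*bd)) :=
      (Commute.one_right z).add_right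
        (hza.mul_right (((Commute.one_right z).sub_right (hza.mul_right hzd)).mul_right hzB))
    rw [← hU] at this
    exact this.units_inv_right
  have cτa : Commute a (↑U⁻¹ : A) := ctt a (Commute.refl a) cad caB
  have cτb : Commute b (↑U⁻¹ : A) := ctt b cab.symm cbd cbB
  have cτd : Commute ad (↑U⁻¹ : A) := ctt ad cad.symm (Commute.refl ad) cdB
  have cτB : Commute bd (↑U⁻¹ : A) := ctt bd caB.symm cdB.symm (Commute.refl bd)
  have cτh : Commute h (↑U⁻¹ : A) := ctt h cah.symm cdh.symm cBh.symm
  -- the closure over six atoms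
  set S : Set A := {a, b, ad, bd, h, (↑U⁻¹ : A)} with hS
  have hScomm : ∀ x ∈ S, ∀ y ∈ S, x * y = y * x := by
    intro x hx y hy
    simp only [hS, Set.mem_insert_iff, Set.mem_singleton_iff] at hx hy
    rcases hx with rfl|rfl|rfl|rfl|rfl|rfl <;> rcases hy with rfl|rfl|rfl|rfl|rfl|rfl <;>
      (first
        | rfl | exact cab.eq | exact cab.symm.eq | exact cad.eq | exact cad.symm.eq
        | exact caB.eq | exact caB.symm.eq | exact cbd.eq | exact cbd.symm.eq
        | exact cbB.eq | exact cbB.symm.eq | exact cdB.eq | exact cdB.symm.eq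
        | exact cah.eq | exact cah.symm.eq | exact cbh.eq | exact cbh.symm.eq
        | exact cdh.eq | exact cdh.symm.eq | exact cBh.eq | exact cBh.symm.eq
        | exact cτa.eq | exact cτa.symm.eq | exact cτb.eq | exact cτb.symm.eq
        | exact cτd.eq | exact cτd.symm.eq | exact cτB.eq | exact cτB.symm.eq
        | exact cτh.eq | exact cτh.symm.eq)
  letI : CommRing (Subring.closure S) := Subring.closureCommRingOfComm hScomm
  have ma : a ∈ Subring.closure S := Subring.subset_closure (by simp [hS])
  have mb : b ∈ Subring.closure S := Subring.subset_closure (by simp [hS])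
  have md : ad ∈ Subring.closure S := Subring.subset_closure (by simp [hS])
  have mB : bd ∈ Subring.closure S := Subring.subset_closure (by simp [hS])
  have mh : h ∈ Subring.closure S := Subring.subset_closure (by simp [hS])
  have mτ : (↑U⁻¹ : A) ∈ Subring.closure S := Subring.subset_closure (by simp [hS])
  set a' : Subring.closure S := ⟨a, ma⟩
  set b' : Subring.closure S := ⟨b, mb⟩
  set d' : Subring.closure S := ⟨ad, md⟩
  set B' : Subring.closure S := ⟨bd, mB⟩
  set h' : Subring.closure S := ⟨h, mh⟩
  set τ' : Subring.closure S := ⟨(↑U⁻¹ : A), mτ⟩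
  have g1 : d'*a'*d' = d' := Subtype.ext ha.2.1
  have g3 : B'*b'*B' = B' := Subtype.ext hb.2.1
  have g4 : h'*(1+d'*b')*h' = h' := Subtype.ext hh.2.1
  have g5 : (1 + a'*((1-a'*d')*B'))*τ' = 1 := Subtype.ext htτ
  refine ⟨(a*ad)*h*ad + bd*((1-a*ad)*(↑U⁻¹ : A)), ?_, ?_, ka'+1+kb+kf, by omega, ?_⟩
  · exact congrArg Subtype.val
      (mul_comm (a'+b') ((a'*d')*h'*d' + B'*((1-a'*d')*τ')))
  · exact congrArg Subtype.val (gen_wsw a' b' d' B' h' τ' g1 g3 g4 g5)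
  · set k : ℕ := ka'+1+kb+kf with hk
    have Hrad : (a+b)^k - (a+b)^(k+1)*((a*ad)*h*ad + bd*((1-a*ad)*(↑U⁻¹:A)))
        = a^k*(a*ad)*((1+ad*b)^k - (1+ad*b)^(k+1)*h)
          + (a+b)^k*((1-b*bd)*((1-a*ad)*(↑U⁻¹:A))) :=
      congrArg Subtype.val (gen_back_rad a' b' d' B' h' τ' g1 g5 k)
    rw [Hrad]
    apply MemJacobson.add
    · exact (memJ_pow_ge hfJ (by omega)).mul_left _
    · rw [Commute.add_pow cab k, Finset.sum_mul]
      apply MemJacobson.sum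
      intro i hi
      by_cases hka : ka' + 1 ≤ i
      · obtain ⟨r, rfl⟩ := Nat.exists_eq_add_of_le hka
        have mn : ((k.choose (ka'+1+r) : ℕ) : A) ∈ Subring.closure S := natCast_mem _ _
        have Hc : a^(ka'+1+r) * b^(k-(ka'+1+r)) * ((k.choose (ka'+1+r) : ℕ) : A)
              * ((1-b*bd)*((1-a*ad)*(↑U⁻¹:A)))
            = (a^(ka'+1) - a^(ka'+1+1)*ad)
              * (a^r * b^(k-(ka'+1+r)) * ((k.choose (ka'+1+r) : ℕ) : A)
                * ((1-b*bd)*(↑U⁻¹:A))) :=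
          congrArg Subtype.val
            (gen_case1 a' b' d' B' τ' ⟨_, mn⟩ (ka'+1) r (k-(ka'+1+r)))
        rw [Hc]
        exact haJ.mul_right _
      · have h2 : kb ≤ k - i := by omega
        obtain ⟨r, hr⟩ := Nat.exists_eq_add_of_le h2
        rw [hr]
        have mn : ((k.choose i : ℕ) : A) ∈ Subring.closure S := natCast_mem _ _
        have Hc : a^i * b^(kb+r) * ((k.choose i : ℕ) : A)
              * ((1-b*bd)*((1-a*ad)*(↑U⁻¹:A)))
            = (b^kb - b^(kb+1)*bd)
              * (a^i * b^r * ((k.choose i : ℕ) : A) * ((1-a*ad)*(↑U⁻¹:A))) :=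
          congrArg Subtype.val (gen_case2 a' b' d' B' τ' ⟨_, mn⟩ i kb r)
        rw [Hc]
        exact hbJ.mul_right _

end Main

theorem stmt7 {A : Type*} [NormedRing A] [NormedAlgebra ℂ A] [CompleteSpace A]
    (a ad b bd : A) (ha : IsPDrazinInv a ad) (hb : IsPDrazinInv b bd)
    (hcomm : a * b = b * a) :
    ((∃ c, IsPDrazinInv (a + b) c) ↔ (∃ c, IsPDrazinInv (1 + ad * b) c)) ∧
      (∀ c, IsPDrazinInv (a + b) c →
        IsPDrazinInv (1 + ad * b) ((1 - a * ad) + a ^ 2 * ad * c)) := by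
  constructor
  · constructor
    · rintro ⟨c, hc⟩
      exact ⟨_, part2 ha hcomm c hc⟩
    · rintro ⟨h, hh⟩
      exact backward ha hb hcomm hh
  · intro c hc
    exact part2 ha hcomm c hc
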